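/- Let G be a finite group of order N, n ≥ 1, and let X_n be the set of pairs (ξ,σ), with ξ : Fin n → G and σ ∈ Perm(Fin n), such that for every x ∈ Fin n the cycle product of ξ along the orbit of x equals the identity. Then for every element t of a commutative ring R, Σ_{(ξ,σ) ∈ X_n} t^{c(σ)} = ∏_{i=0}^{n−1} (t + i·N), where c(σ) is the number of orbits of σ on Fin n. -/

import Mathlib

/-- The cycle product of `ξ : Fin n → G` along the orbit of `x` under `σ`:
if `d ≥ 1` is the size of the orbit of `x` (the minimal period of `x` under `σ`),
this is `ξ(σ^{d-1} x) · ξ(σ^{d-2} x) ⋯ ξ(σ x) · ξ(x)`. -/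
noncomputable def cycleProd {G : Type*} [Group G] {n : ℕ} (σ : Equiv.Perm (Fin n))
    (ξ : Fin n → G) (x : Fin n) : G :=
  (((List.range (Function.minimalPeriod (⇑σ) x)).map (fun k => ξ ((σ ^ k) x))).reverse).prod

namespace Stmt8

open Equiv Equiv.Perm Function

variable {G : Type*} [Group G] {n : ℕ}

noncomputable def pathProd (σ : Perm (Fin n)) (ξ : Fin n → G) (x : Fin n) (m : ℕ) : G :=
  (((List.range m).map (fun k => ξ ((σ ^ k) x))).reverse).prod

lemma cycleProd_eq_pathProd (σ : Perm (Fin n)) (ξ : Fin n → G) (x : Fin n) :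
    cycleProd σ ξ x = pathProd σ ξ x (Function.minimalPeriod (⇑σ) x) := rfl

lemma pathProd_zero (σ : Perm (Fin n)) (ξ : Fin n → G) (x : Fin n) :
    pathProd σ ξ x 0 = 1 := rfl

lemma pathProd_succ (σ : Perm (Fin n)) (ξ : Fin n → G) (x : Fin n) (m : ℕ) :
    pathProd σ ξ x (m + 1) = ξ ((σ ^ m) x) * pathProd σ ξ x m := by
  simp [pathProd, List.range_succ]

lemma pathProd_add (σ : Perm (Fin n)) (ξ : Fin n → G) (x : Fin n) (m l : ℕ) :
    pathProd σ ξ x (m + l) = pathProd σ ξ ((σ ^ m) x) l * pathProd σ ξ x m := by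
  induction l with
  | zero => simp [pathProd_zero]
  | succ l ih =>
      rw [← Nat.add_assoc, pathProd_succ, ih, pathProd_succ, mul_assoc]
      congr 2
      rw [← Equiv.Perm.mul_apply, ← pow_add, Nat.add_comm]

lemma perm_periodic (σ : Perm (Fin n)) (x : Fin n) : x ∈ Function.periodicPts (⇑σ) := by
  apply Function.mk_mem_periodicPts (n := orderOf σ) (orderOf_pos σ)
  show (⇑σ)^[orderOf σ] x = x
  rw [← Equiv.Perm.coe_pow, pow_orderOf_eq_one]; rfl

lemma minimalPeriod_pos (σ : Perm (Fin n)) (x : Fin n) :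
    0 < Function.minimalPeriod (⇑σ) x :=
  Function.minimalPeriod_pos_of_mem_periodicPts (perm_periodic σ x)

lemma pow_minimalPeriod (σ : Perm (Fin n)) (x : Fin n) :
    (σ ^ (Function.minimalPeriod (⇑σ) x)) x = x := by
  rw [Equiv.Perm.coe_pow] at *
  exact Function.iterate_minimalPeriod

lemma minimalPeriod_pow_apply (σ : Perm (Fin n)) (x : Fin n) (m : ℕ) :
    Function.minimalPeriod (⇑σ) ((σ ^ m) x) = Function.minimalPeriod (⇑σ) x := by
  rw [Equiv.Perm.coe_pow]
  exact Function.minimalPeriod_apply_iterate (perm_periodic σ x) m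

lemma pow_dvd_apply (σ : Perm (Fin n)) (x : Fin n) {m : ℕ}
    (hm : Function.minimalPeriod (⇑σ) x ∣ m) : (σ ^ m) x = x := by
  have : Function.IsPeriodicPt (⇑σ) m x :=
    (Function.isPeriodicPt_minimalPeriod (⇑σ) x).trans_dvd hm
  exact this

/-- multiples of the minimal period give trivial path products, assuming all
cycle products are trivial. -/
lemma pathProd_mul_minimalPeriod (σ : Perm (Fin n)) (ξ : Fin n → G)
    (hcp : ∀ y, cycleProd σ ξ y = 1) (x : Fin n) (c : ℕ) :
    pathProd σ ξ x (c * Function.minimalPeriod (⇑σ) x) = 1 := by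
  induction c with
  | zero => simp [pathProd_zero]
  | succ c ih =>
      have hfix : (σ ^ (c * Function.minimalPeriod (⇑σ) x)) x = x :=
        pow_dvd_apply σ x ⟨c, Nat.mul_comm _ _⟩
      rw [Nat.succ_mul, pathProd_add, ih, mul_one, hfix, ← cycleProd_eq_pathProd]
      exact hcp x

lemma pathProd_eq_of_pow_eq (σ : Perm (Fin n)) (ξ : Fin n → G)
    (hcp : ∀ y, cycleProd σ ξ y = 1) {x : Fin n} {a b : ℕ}
    (hab : (σ ^ a) x = (σ ^ b) x) : pathProd σ ξ x a = pathProd σ ξ x b := by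
  wlog h : a ≤ b generalizing a b
  · exact (this hab.symm (le_of_not_ge h)).symm
  obtain ⟨l, rfl⟩ := Nat.exists_eq_add_of_le h
  have hper : (σ ^ l) ((σ ^ a) x) = (σ ^ a) x := by
    rw [← Equiv.Perm.mul_apply, ← pow_add, Nat.add_comm]
    exact hab.symm
  have hdvd : Function.minimalPeriod (⇑σ) ((σ ^ a) x) ∣ l := by
    apply Function.IsPeriodicPt.minimalPeriod_dvd
    show (⇑σ)^[l] ((σ ^ a) x) = (σ ^ a) x
    rw [← Equiv.Perm.coe_pow]; exact hper
  obtain ⟨c, rfl⟩ := hdvd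
  rw [pathProd_add, right_eq_mul, Nat.mul_comm]
  exact pathProd_mul_minimalPeriod σ ξ hcp _ c

/-- The coboundary characterization of the cycle-product condition. -/
lemma cob_iff (σ : Perm (Fin n)) (ξ : Fin n → G) :
    (∀ x, cycleProd σ ξ x = 1) ↔ ∃ h : Fin n → G, ∀ x, ξ x = h (σ x) * (h x)⁻¹ := by
  constructor
  · intro hcp
    -- choose representatives
    set s := Equiv.Perm.SameCycle.setoid σ with hs
    have hrep : ∀ x : Fin n, ∃ k : ℕ, (σ ^ k) ((Quotient.mk s x).out) = x := by
      intro x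
      have : Equiv.Perm.SameCycle σ ((Quotient.mk s x).out) x := Quotient.mk_out x
      obtain ⟨i, hi, h⟩ := this.exists_pow_eq'
      exact ⟨i, h⟩
    choose k hk using hrep
    refine ⟨fun x => pathProd σ ξ ((Quotient.mk s x).out) (k x), fun x => ?_⟩
    have hout : (Quotient.mk s (σ x)).out = (Quotient.mk s x).out := by
      congr 1
      refine Quotient.sound (⟨-1, ?_⟩ : Equiv.Perm.SameCycle σ (σ x) x)
      simp
    show ξ x = pathProd σ ξ ((Quotient.mk s (σ x)).out) (k (σ x)) *
      (pathProd σ ξ ((Quotient.mk s x).out) (k x))⁻¹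
    have h1 : (σ ^ (k (σ x))) ((Quotient.mk s x).out) =
        (σ ^ (k x + 1)) ((Quotient.mk s x).out) := by
      rw [pow_succ', Equiv.Perm.mul_apply, hk x, ← hout]
      exact hk (σ x)
    rw [hout, pathProd_eq_of_pow_eq σ ξ hcp h1, pathProd_succ, hk x]
    exact (mul_inv_cancel_right _ _).symm
  · rintro ⟨h, hh⟩ x
    have tele : ∀ m, pathProd σ ξ x m = h ((σ ^ m) x) * (h x)⁻¹ := by
      intro m
      induction m with
      | zero => simp [pathProd_zero]
      | succ m ih =>
          rw [pathProd_succ, ih, hh ((σ ^ m) x), mul_assoc, inv_mul_cancel_left,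
            ← Equiv.Perm.mul_apply, ← pow_succ']
    rw [cycleProd_eq_pathProd, tele, pow_minimalPeriod, mul_inv_cancel]

lemma invariant_zpow {α : Type*} {A : Type*} {σ : Perm α} {f : α → A}
    (hf : ∀ x, f (σ x) = f x) : ∀ (i : ℤ) (x : α), f ((σ ^ i) x) = f x := by
  have hnat : ∀ (m : ℕ) (x : α), f ((σ ^ m) x) = f x := by
    intro m
    induction m with
    | zero => intro x; simp
    | succ m ih => intro x; rw [pow_succ', Equiv.Perm.mul_apply, hf, ih]
  intro i x
  cases i with
  | ofNat m => simpa using hnat m x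
  | negSucc m =>
      have := hnat (m + 1) ((σ ^ (Int.negSucc m)) x)
      rw [← Equiv.Perm.mul_apply, ← zpow_natCast, ← zpow_add,
        show (((m + 1 : ℕ) : ℤ)) + Int.negSucc m = 0 by
          rw [Int.negSucc_eq]; push_cast; ring,
        zpow_zero, Equiv.Perm.one_apply] at this
      exact this.symm

/-- Functions invariant under a permutation correspond to functions on the
quotient by the same-cycle relation. -/
noncomputable def invariantEquiv {α : Type*} (σ : Perm α) (A : Type*) :
    {f : α → A // ∀ x, f (σ x) = f x} ≃
      (Quotient (Equiv.Perm.SameCycle.setoid σ) → A) where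
  toFun f := Quotient.lift f.1 (fun a b hab => by
    obtain ⟨i, hi⟩ := hab
    rw [← hi]
    exact (invariant_zpow f.2 i a).symm)
  invFun g := ⟨fun x => g (Quotient.mk (Equiv.Perm.SameCycle.setoid σ) x), fun x =>
    congrArg g (Quotient.sound (⟨-1, by simp⟩ : Equiv.Perm.SameCycle σ (σ x) x))⟩
  left_inv f := Subtype.ext (funext fun x => rfl)
  right_inv g := funext fun q => Quotient.inductionOn q fun x => rfl

lemma card_invariant (σ : Perm (Fin n)) (A : Type*) [Finite A] :
    Nat.card {f : Fin n → A // ∀ x, f (σ x) = f x} =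
      Nat.card A ^ Nat.card (Quotient (Equiv.Perm.SameCycle.setoid σ)) := by
  rw [Nat.card_congr (invariantEquiv σ A), Nat.card_fun]

/-- Invariant functions for the spliced permutation, `p = j.succ ≠ 0`. -/
def invD1 (e : Perm (Fin n)) (j : Fin n) (A : Type*) :
    {f : Fin (n+1) → A //
        ∀ x, f (Equiv.Perm.decomposeFin.symm (j.succ, e) x) = f x} ≃
      {f' : Fin n → A // ∀ x, f' (e x) = f' x} where
  toFun f := ⟨fun i => f.1 i.succ, by
    intro i
    show f.1 (e i).succ = f.1 i.succ
    by_cases hij : e i = j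
    · have h0 : f.1 (Equiv.Perm.decomposeFin.symm (j.succ, e) 0) = f.1 0 := f.2 0
      rw [Equiv.Perm.decomposeFin_symm_apply_zero] at h0
      have hi : f.1 (Equiv.Perm.decomposeFin.symm (j.succ, e) i.succ) = f.1 i.succ := f.2 i.succ
      rw [Equiv.Perm.decomposeFin_symm_apply_succ, hij, Equiv.swap_apply_right] at hi
      rw [hij, h0, hi]
    · have hi : f.1 (Equiv.Perm.decomposeFin.symm (j.succ, e) i.succ) = f.1 i.succ := f.2 i.succ
      rw [Equiv.Perm.decomposeFin_symm_apply_succ,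
        Equiv.swap_apply_of_ne_of_ne (Fin.succ_ne_zero _)
          (fun h => hij (Fin.succ_injective _ h))] at hi
      exact hi⟩
  invFun f' := ⟨Fin.cases (f'.1 j) f'.1, by
    intro x
    induction x using Fin.cases with
    | zero => rw [Equiv.Perm.decomposeFin_symm_apply_zero]; simp
    | succ i =>
        rw [Equiv.Perm.decomposeFin_symm_apply_succ]
        by_cases hij : e i = j
        · rw [hij, Equiv.swap_apply_right]
          simp [← hij, f'.2 i]
        · rw [Equiv.swap_apply_of_ne_of_ne (Fin.succ_ne_zero _)
            (fun h => hij (Fin.succ_injective _ h))]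
          simp [f'.2 i]⟩
  left_inv f := by
    apply Subtype.ext
    funext x
    induction x using Fin.cases with
    | zero =>
        have h0 : f.1 (Equiv.Perm.decomposeFin.symm (j.succ, e) 0) = f.1 0 := f.2 0
        rw [Equiv.Perm.decomposeFin_symm_apply_zero] at h0
        simpa using h0
    | succ i => simp
  right_inv f' := by
    apply Subtype.ext
    funext i
    simp

/-- Invariant functions for the spliced permutation, `p = 0`. -/
def invD0 (e : Perm (Fin n)) (A : Type*) :
    {f : Fin (n+1) → A //
        ∀ x, f (Equiv.Perm.decomposeFin.symm ((0 : Fin (n+1)), e) x) = f x} ≃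
      ({f' : Fin n → A // ∀ x, f' (e x) = f' x} × A) where
  toFun f := (⟨fun i => f.1 i.succ, by
    intro i
    show f.1 (e i).succ = f.1 i.succ
    have hi : f.1 (Equiv.Perm.decomposeFin.symm ((0 : Fin (n+1)), e) i.succ) = f.1 i.succ :=
      f.2 i.succ
    rw [Equiv.Perm.decomposeFin_symm_apply_succ, Equiv.swap_self, Equiv.refl_apply] at hi
    exact hi⟩, f.1 0)
  invFun fa := ⟨Fin.cases fa.2 fa.1.1, by
    intro x
    induction x using Fin.cases with
    | zero => rw [Equiv.Perm.decomposeFin_symm_apply_zero]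
    | succ i =>
        rw [Equiv.Perm.decomposeFin_symm_apply_succ, Equiv.swap_self, Equiv.refl_apply]
        simp [fa.1.2 i]⟩
  left_inv f := by
    apply Subtype.ext
    funext x
    induction x using Fin.cases with
    | zero => simp
    | succ i => simp
  right_inv fa := by
    refine Prod.ext (Subtype.ext (funext fun i => ?_)) ?_ <;> simp

/-- Number of cycles of the decomposed permutation. -/
lemma card_quot_decompose (p : Fin (n+1)) (e : Perm (Fin n)) :
    Nat.card (Quotient (Equiv.Perm.SameCycle.setoid (Equiv.Perm.decomposeFin.symm (p, e)))) =
      Nat.card (Quotient (Equiv.Perm.SameCycle.setoid e)) + (if p = 0 then 1 else 0) := by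
  have h2 : Nat.card (Fin 2) = 2 := by simp
  refine Nat.pow_right_injective (le_refl 2) (?_ : (2:ℕ) ^ _ = 2 ^ _)
  have lhs := card_invariant (Equiv.Perm.decomposeFin.symm (p, e)) (Fin 2)
  have rhs := card_invariant e (Fin 2)
  rw [h2] at lhs rhs
  rw [← lhs]
  by_cases hp : p = 0
  · subst hp
    rw [Nat.card_congr (invD0 e (Fin 2)), Nat.card_prod, rhs, h2]
    simp [pow_succ]
  · obtain ⟨j, rfl⟩ := Fin.eq_succ_of_ne_zero hp
    rw [Nat.card_congr (invD1 e j (Fin 2)), rhs]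
    simp [hp]

lemma swap_succ (j : Fin n) (y : Fin n) :
    Equiv.swap (0 : Fin (n+1)) j.succ y.succ = if y = j then 0 else y.succ := by
  by_cases h : y = j
  · subst h; simp [Equiv.swap_apply_right]
  · rw [Equiv.swap_apply_of_ne_of_ne (Fin.succ_ne_zero _)
      (fun hh => h (Fin.succ_injective _ hh)), if_neg h]

lemma cond_transfer_zero (e : Perm (Fin n)) (g : G) (ξ' : Fin n → G) :
    (∀ x, cycleProd (Equiv.Perm.decomposeFin.symm ((0 : Fin (n+1)), e))
        (Fin.cases g (fun i =>
          if i.succ = (0 : Fin (n+1)) then ξ' i * g⁻¹ else ξ' i) : Fin (n+1) → G) x = 1)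
      ↔ ((∀ x, cycleProd e ξ' x = 1) ∧ g = 1) := by
  have hσ0 : Equiv.Perm.decomposeFin.symm ((0 : Fin (n+1)), e) 0 = 0 :=
    Equiv.Perm.decomposeFin_symm_apply_zero 0 e
  have hσs : ∀ i : Fin n,
      Equiv.Perm.decomposeFin.symm ((0 : Fin (n+1)), e) i.succ = (e i).succ := fun i => by
    rw [Equiv.Perm.decomposeFin_symm_apply_succ, Equiv.swap_self, Equiv.refl_apply]
  rw [cob_iff, cob_iff]
  constructor
  · rintro ⟨h, hh⟩
    constructor
    · refine ⟨fun i => h i.succ, fun i => ?_⟩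
      have := hh i.succ
      rw [hσs] at this
      simpa [Fin.succ_ne_zero] using this
    · have := hh 0
      rw [hσ0] at this
      simpa using this
  · rintro ⟨⟨h', hh'⟩, hg⟩
    refine ⟨Fin.cases 1 h', fun x => ?_⟩
    induction x using Fin.cases with
    | zero => rw [hσ0]; simp [hg]
    | succ i => rw [hσs]; simpa [Fin.succ_ne_zero] using hh' i

lemma cond_transfer_succ (e : Perm (Fin n)) (j : Fin n) (g : G) (ξ' : Fin n → G) :
    (∀ x, cycleProd (Equiv.Perm.decomposeFin.symm (j.succ, e))
        (Fin.cases g (fun i =>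
          if i.succ = j.succ then ξ' i * g⁻¹ else ξ' i) : Fin (n+1) → G) x = 1)
      ↔ (∀ x, cycleProd e ξ' x = 1) := by
  have hσ0 : Equiv.Perm.decomposeFin.symm (j.succ, e) 0 = j.succ :=
    Equiv.Perm.decomposeFin_symm_apply_zero j.succ e
  have hσs : ∀ i : Fin n,
      Equiv.Perm.decomposeFin.symm (j.succ, e) i.succ = if e i = j then 0 else (e i).succ :=
    fun i => by rw [Equiv.Perm.decomposeFin_symm_apply_succ, swap_succ]
  rw [cob_iff, cob_iff]
  constructor
  · rintro ⟨h, hh⟩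
    refine ⟨fun i => if i = j then h 0 else h i.succ, fun i => ?_⟩
    show ξ' i = (if e i = j then h 0 else h (e i).succ) * (if i = j then h 0 else h i.succ)⁻¹
    by_cases hij : i = j
    · subst hij
      have h1 := hh i.succ
      rw [hσs] at h1
      simp only [Fin.cases_succ, if_pos rfl] at h1
      have h2 := hh 0
      rw [hσ0] at h2
      simp only [Fin.cases_zero, Fin.cases_succ] at h2
      -- h1 : ξ' i * g⁻¹ = h (if e i = i then 0 else (e i).succ) * (h i.succ)⁻¹
      -- h2 : g = h i.succ * (h 0)⁻¹
      rw [if_pos rfl]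
      have : ξ' i = h (if e i = i then 0 else (e i).succ) * (h i.succ)⁻¹ * g := by
        rw [← h1]; simp [mul_assoc]
      rw [this, h2, apply_ite h]
      group
    · have h1 := hh i.succ
      rw [hσs] at h1
      simp only [Fin.cases_succ,
        if_neg (fun hh0 => hij (Fin.succ_injective _ hh0))] at h1
      rw [h1, if_neg hij, apply_ite h]
  · rintro ⟨h', hh'⟩
    refine ⟨Fin.cases (h' j) (fun i => if i = j then g * h' j else h' i), fun x => ?_⟩
    induction x using Fin.cases with
    | zero =>
        rw [hσ0]
        simp
    | succ i =>
        rw [hσs]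
        by_cases hij : i = j
        · subst hij
          have key : (Fin.cases (h' i) (fun k => if k = i then g * h' i else h' k) :
              Fin (n+1) → G) (if e i = i then 0 else (e i).succ) = h' (e i) := by
            by_cases hei : e i = i
            · rw [if_pos hei, hei]; simp
            · rw [if_neg hei]; simp [hei]
          rw [key]
          simp only [Fin.cases_succ, if_pos rfl]
          rw [hh' i]
          simp [mul_inv_rev, mul_assoc]
        · have key : (Fin.cases (h' j) (fun k => if k = j then g * h' j else h' k) :
              Fin (n+1) → G) (if e i = j then 0 else (e i).succ) = h' (e i) := by
            by_cases hei : e i = j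
            · rw [if_pos hei, hei]; simp
            · rw [if_neg hei]; simp [hei]
          rw [key]
          simp only [Fin.cases_succ, if_neg hij,
            if_neg (fun hh0 : i.succ = j.succ => hij (Fin.succ_injective _ hh0))]
          exact hh' i

lemma decomposeFin_fst (σ : Perm (Fin (n+1))) :
    (Equiv.Perm.decomposeFin σ).1 = σ 0 := by
  have := Equiv.Perm.decomposeFin_symm_apply_zero (Equiv.Perm.decomposeFin σ).1
    (Equiv.Perm.decomposeFin σ).2
  rw [Prod.mk.eta, Equiv.symm_apply_apply] at this
  exact this.symm

/-- The bijection splitting off the behaviour at `0`. -/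
def mainEquiv (n : ℕ) (G : Type*) [Group G] :
    ((Fin (n+1) → G) × Perm (Fin (n+1))) ≃
      ((Fin (n+1) × G) × ((Fin n → G) × Perm (Fin n))) where
  toFun q := ((q.2 0, q.1 0),
    (fun i => if i.succ = q.2 0 then q.1 i.succ * q.1 0 else q.1 i.succ,
     (Equiv.Perm.decomposeFin q.2).2))
  invFun q := (Fin.cases q.1.2 (fun i => if i.succ = q.1.1 then q.2.1 i * q.1.2⁻¹ else q.2.1 i),
    Equiv.Perm.decomposeFin.symm (q.1.1, q.2.2))
  left_inv q := by
    obtain ⟨ξ, σ⟩ := q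
    refine Prod.ext ?_ ?_
    · show (Fin.cases (ξ 0) (fun i => if i.succ = σ 0 then
        (if i.succ = σ 0 then ξ i.succ * ξ 0 else ξ i.succ) * (ξ 0)⁻¹
        else (if i.succ = σ 0 then ξ i.succ * ξ 0 else ξ i.succ)) : Fin (n+1) → G) = ξ
      funext x
      induction x using Fin.cases with
      | zero => simp
      | succ i =>
          by_cases hi : i.succ = σ 0
          · rw [Fin.cases_succ, if_pos hi, if_pos hi, mul_inv_cancel_right]
          · rw [Fin.cases_succ, if_neg hi, if_neg hi]
    · show Equiv.Perm.decomposeFin.symm (σ 0, (Equiv.Perm.decomposeFin σ).2) = σ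
      rw [← decomposeFin_fst σ, Prod.mk.eta, Equiv.symm_apply_apply]
  right_inv q := by
    obtain ⟨⟨p, g⟩, ξ', e⟩ := q
    have hσ0 : Equiv.Perm.decomposeFin.symm (p, e) 0 = p :=
      Equiv.Perm.decomposeFin_symm_apply_zero p e
    have hd : Equiv.Perm.decomposeFin (Equiv.Perm.decomposeFin.symm (p, e)) = (p, e) :=
      Equiv.apply_symm_apply _ _
    refine Prod.ext (Prod.ext ?_ ?_) (Prod.ext ?_ ?_)
    · exact hσ0
    · rfl
    · show (fun i => if i.succ = Equiv.Perm.decomposeFin.symm (p, e) 0 then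
        (Fin.cases g (fun i => if i.succ = p then ξ' i * g⁻¹ else ξ' i) : Fin (n+1) → G) i.succ *
          (Fin.cases g (fun i => if i.succ = p then ξ' i * g⁻¹ else ξ' i) : Fin (n+1) → G) 0
        else (Fin.cases g (fun i => if i.succ = p then ξ' i * g⁻¹ else ξ' i) :
          Fin (n+1) → G) i.succ) = ξ'
      funext i
      rw [hσ0]
      by_cases hi : i.succ = p
      · rw [if_pos hi]
        simp only [Fin.cases_succ, Fin.cases_zero]
        rw [if_pos hi, inv_mul_cancel_right]
      · rw [if_neg hi]
        simp only [Fin.cases_succ]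
        rw [if_neg hi]
    · show (Equiv.Perm.decomposeFin (Equiv.Perm.decomposeFin.symm (p, e))).2 = e
      rw [hd]

open Classical in
lemma main (G : Type*) [Group G] [Fintype G] {R : Type*} [CommRing R] (t : R) (n : ℕ) :
    ∑ q : (Fin n → G) × Equiv.Perm (Fin n),
      (if (∀ x, cycleProd q.2 q.1 x = 1) then
        t ^ (Nat.card (Quotient (Equiv.Perm.SameCycle.setoid q.2))) else 0) =
      ∏ i ∈ Finset.range n, (t + (i : R) * ((Fintype.card G : ℕ) : R)) := by
  induction n with
  | zero =>
      rw [Finset.prod_range_zero]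
      have h1 : ∀ q : (Fin 0 → G) × Equiv.Perm (Fin 0),
          (if (∀ x, cycleProd q.2 q.1 x = 1) then
            t ^ (Nat.card (Quotient (Equiv.Perm.SameCycle.setoid q.2))) else (0:R)) = 1 := by
        intro q
        have hE : IsEmpty (Quotient (Equiv.Perm.SameCycle.setoid q.2)) :=
          ⟨fun c => Quotient.inductionOn c fun x => x.elim0⟩
        rw [if_pos (fun x => x.elim0), Nat.card_of_isEmpty, pow_zero]
      rw [Finset.sum_congr rfl fun q _ => h1 q, Finset.sum_const, Finset.card_univ]
      simp [Fintype.card_prod, Fintype.card_perm, Fintype.card_fun]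
  | succ n ih =>
      rw [Finset.prod_range_succ, ← ih]
      have hre := Equiv.sum_comp (mainEquiv n G).symm
        (fun q : (Fin (n+1) → G) × Equiv.Perm (Fin (n+1)) =>
          if (∀ x, cycleProd q.2 q.1 x = 1) then
            t ^ (Nat.card (Quotient (Equiv.Perm.SameCycle.setoid q.2))) else (0:R))
      rw [← hre]
      have hsum : ∀ q : (Fin (n+1) × G) × ((Fin n → G) × Equiv.Perm (Fin n)),
          (fun q' : (Fin (n+1) → G) × Equiv.Perm (Fin (n+1)) =>
            if (∀ x, cycleProd q'.2 q'.1 x = 1) then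
              t ^ (Nat.card (Quotient (Equiv.Perm.SameCycle.setoid q'.2))) else (0:R))
            ((mainEquiv n G).symm q) =
          (if (∀ x, cycleProd q.2.2 q.2.1 x = 1) then
            (if q.1.1 = 0 then (if q.1.2 = 1 then
                t ^ (Nat.card (Quotient (Equiv.Perm.SameCycle.setoid q.2.2)) + 1) else 0)
              else t ^ (Nat.card (Quotient (Equiv.Perm.SameCycle.setoid q.2.2)))) else 0) := by
        rintro ⟨⟨p, g⟩, ξ', e⟩
        show (if (∀ x, cycleProd (Equiv.Perm.decomposeFin.symm (p, e))
            (Fin.cases g (fun i => if i.succ = p then ξ' i * g⁻¹ else ξ' i) : Fin (n+1) → G) x = 1)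
          then t ^ (Nat.card (Quotient (Equiv.Perm.SameCycle.setoid
            (Equiv.Perm.decomposeFin.symm (p, e))))) else (0:R)) =
          (if (∀ x, cycleProd e ξ' x = 1) then
            (if p = 0 then (if g = 1 then
                t ^ (Nat.card (Quotient (Equiv.Perm.SameCycle.setoid e)) + 1) else 0)
              else t ^ (Nat.card (Quotient (Equiv.Perm.SameCycle.setoid e)))) else 0)
        rw [card_quot_decompose p e]
        induction p using Fin.cases with
        | zero =>
            simp only [cond_transfer_zero e g ξ']
            by_cases hA : (∀ x, cycleProd e ξ' x = 1) <;> by_cases hg : g = 1 <;>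
              simp [hA, hg]
        | succ j =>
            simp only [cond_transfer_succ e j g ξ', if_neg (Fin.succ_ne_zero j), Nat.add_zero]
      rw [Finset.sum_congr rfl fun q _ => hsum q]
      rw [Fintype.sum_prod_type]
      rw [Finset.sum_comm]
      have hinner : ∀ v : (Fin n → G) × Equiv.Perm (Fin n),
          (∑ u : Fin (n+1) × G,
            (if (∀ x, cycleProd v.2 v.1 x = 1) then
              (if u.1 = 0 then (if u.2 = 1 then
                  t ^ (Nat.card (Quotient (Equiv.Perm.SameCycle.setoid v.2)) + 1) else 0)
                else t ^ (Nat.card (Quotient (Equiv.Perm.SameCycle.setoid v.2)))) else (0:R))) =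
          (if (∀ x, cycleProd v.2 v.1 x = 1) then
            (t + (n : R) * ((Fintype.card G : ℕ) : R)) *
              t ^ (Nat.card (Quotient (Equiv.Perm.SameCycle.setoid v.2))) else 0) := by
        intro v
        by_cases hA : (∀ x, cycleProd v.2 v.1 x = 1)
        · simp only [if_pos hA]
          rw [Fintype.sum_prod_type, Fin.sum_univ_succ]
          have h1 : (∑ b : G, if (0 : Fin (n+1)) = 0 then (if b = 1 then
              t ^ (Nat.card (Quotient (Equiv.Perm.SameCycle.setoid v.2)) + 1) else 0)
              else t ^ (Nat.card (Quotient (Equiv.Perm.SameCycle.setoid v.2)))) =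
              t ^ (Nat.card (Quotient (Equiv.Perm.SameCycle.setoid v.2)) + 1) := by
            simp
          have h2 : ∀ j : Fin n, (∑ b : G, if j.succ = (0 : Fin (n+1)) then (if b = 1 then
              t ^ (Nat.card (Quotient (Equiv.Perm.SameCycle.setoid v.2)) + 1) else 0)
              else t ^ (Nat.card (Quotient (Equiv.Perm.SameCycle.setoid v.2)))) =
              ((Fintype.card G : ℕ) : R) *
                t ^ (Nat.card (Quotient (Equiv.Perm.SameCycle.setoid v.2))) := by
            intro j
            rw [Finset.sum_congr rfl (fun b _ => if_neg (Fin.succ_ne_zero j)),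
              Finset.sum_const, Finset.card_univ, nsmul_eq_mul]
          rw [h1, Finset.sum_congr rfl (fun j _ => h2 j), Finset.sum_const, Finset.card_univ,
            Fintype.card_fin, nsmul_eq_mul]
          ring
        · simp [hA]
      rw [Finset.sum_congr rfl fun v _ => hinner v]
      have hfactor : ∀ v : (Fin n → G) × Equiv.Perm (Fin n),
          (if (∀ x, cycleProd v.2 v.1 x = 1) then
            (t + (n : R) * ((Fintype.card G : ℕ) : R)) *
              t ^ (Nat.card (Quotient (Equiv.Perm.SameCycle.setoid v.2))) else 0) =
          (if (∀ x, cycleProd v.2 v.1 x = 1) then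
            t ^ (Nat.card (Quotient (Equiv.Perm.SameCycle.setoid v.2))) else 0) *
            (t + (n : R) * ((Fintype.card G : ℕ) : R)) := by
        intro v
        by_cases hA : (∀ x, cycleProd v.2 v.1 x = 1) <;> simp [hA, mul_comm]
      rw [Finset.sum_congr rfl fun v _ => hfactor v, ← Finset.sum_mul]

end Stmt8


open Classical in
/-- Let `G` be a finite group of order `N`, `n ≥ 1`, and let `Xₙ` be the
set of pairs `(ξ, σ)` such that every cycle product of `ξ` along an orbit of `σ` is
trivial.  Then for every `t` in a commutative ring `R`,
`Σ_{(ξ,σ) ∈ Xₙ} t ^ c(σ) = ∏_{i=0}^{n-1} (t + i·N)`, where `c(σ)` is the number of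
orbits of `σ` on `Fin n`. -/
theorem stmt8 (G : Type*) [Group G] [Fintype G] {R : Type*} [CommRing R]
    {n : ℕ} (hn : 1 ≤ n) (N : ℕ) (hN : N = Fintype.card G) (t : R) :
    ∑ p ∈ Finset.univ.filter
        (fun p : (Fin n → G) × Equiv.Perm (Fin n) => ∀ x : Fin n, cycleProd p.2 p.1 x = 1),
        t ^ (Nat.card (Quotient (Equiv.Perm.SameCycle.setoid p.2))) =
      ∏ i ∈ Finset.range n, (t + (i : R) * (N : R)) := by
  subst hN
  rw [Finset.sum_filter]
  exact Stmt8.main G t n
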